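/- Let ε ∈ (0, π/20), c₀ > 0, and define φ(ζ) = c₀·(sin((π−ε)ζ + ε/2) + 64(ζ − 1/4)³·sin(ε/2)) for ζ ∈ [0, 1/4]. Suppose additionally that (arccos(φ'(ζ)) − ε/2)² − (π−ε)²·ζ² ≥ 1 and (π − ε)·cos((π−ε)ζ + ε/2) ≥ 12·sin(ε/2) for all ζ ∈ (0, 1/4]. Then for all ζ ∈ (0, 1/4]: φ''(ζ) + (π−ε)²·φ(ζ) + ζ^{−1}·φ'(ζ)·((arccos(φ'(ζ)) − ε/2)² − (π−ε)²·ζ²) ≥ 48·c₀·sin(ε/2)·(4(ζ − 1/4) + 1)² ≥ 0. -/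

import Mathlib

set_option maxHeartbeats 800000

open Real

theorem stmt_2 (ε c₀ : ℝ) (hε : ε ∈ Set.Ioo 0 (π / 20)) (hc₀ : 0 < c₀)
    (φ : ℝ → ℝ)
    (hφ : ∀ ζ : ℝ, φ ζ =
      c₀ * (Real.sin ((π - ε) * ζ + ε / 2) + 64 * (ζ - 1 / 4) ^ 3 * Real.sin (ε / 2)))
    (h1 : ∀ ζ ∈ Set.Ioc (0 : ℝ) (1 / 4),
      (Real.arccos (deriv φ ζ) - ε / 2) ^ 2 - (π - ε) ^ 2 * ζ ^ 2 ≥ 1)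
    (h2 : ∀ ζ ∈ Set.Ioc (0 : ℝ) (1 / 4),
      (π - ε) * Real.cos ((π - ε) * ζ + ε / 2) ≥ 12 * Real.sin (ε / 2)) :
    ∀ ζ ∈ Set.Ioc (0 : ℝ) (1 / 4),
      deriv (deriv φ) ζ + (π - ε) ^ 2 * φ ζ +
          ζ⁻¹ * deriv φ ζ *
            ((Real.arccos (deriv φ ζ) - ε / 2) ^ 2 - (π - ε) ^ 2 * ζ ^ 2) ≥
        48 * c₀ * Real.sin (ε / 2) * (4 * (ζ - 1 / 4) + 1) ^ 2 ∧
      48 * c₀ * Real.sin (ε / 2) * (4 * (ζ - 1 / 4) + 1) ^ 2 ≥ 0 := by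
  obtain ⟨hε0, hεπ⟩ := hε
  have hπlt : π < 3.15 := by
    have := Real.pi_lt_d2
    linarith
  have hπgt : (3.14 : ℝ) < π := by
    have := Real.pi_gt_d6
    linarith
  set P := π - ε with hP
  set s := Real.sin (ε / 2) with hs
  have hs0 : 0 < s := Real.sin_pos_of_pos_of_lt_pi (by linarith) (by linarith)
  have hP0 : 0 < P := by simp only [hP]; linarith
  have hP2 : P ^ 2 ≤ 10 := by
    have hPle : P ≤ π := by simp only [hP]; linarith
    nlinarith
  have hφfun : φ = fun x => c₀ * (Real.sin (P * x + ε / 2) + 64 * (x - 1 / 4) ^ 3 * s) :=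
    funext hφ
  have hd1 : ∀ x : ℝ,
      HasDerivAt φ (c₀ * (P * Real.cos (P * x + ε / 2) + 192 * (x - 1 / 4) ^ 2 * s)) x := by
    intro x
    rw [hφfun]
    have hlin : HasDerivAt (fun x : ℝ => P * x + ε / 2) P x := by
      simpa using ((hasDerivAt_id x).const_mul P).add_const (ε / 2)
    have hsin : HasDerivAt (fun x : ℝ => Real.sin (P * x + ε / 2))
        (Real.cos (P * x + ε / 2) * P) x := (Real.hasDerivAt_sin _).comp x hlin
    have hcube : HasDerivAt (fun x : ℝ => (x - 1 / 4) ^ 3) (3 * (x - 1 / 4) ^ 2) x := by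
      have := ((hasDerivAt_id x).sub_const (1 / 4)).fun_pow 3
      simpa using this
    have := (hsin.add ((hcube.const_mul (64 : ℝ)).mul_const s)).const_mul c₀
    exact this.congr_deriv (by ring)
  have hderiv1 : deriv φ = fun x => c₀ * (P * Real.cos (P * x + ε / 2) + 192 * (x - 1 / 4) ^ 2 * s) := by
    funext x; exact (hd1 x).deriv
  have hd2 : ∀ x : ℝ,
      HasDerivAt (deriv φ)
        (c₀ * (-(P ^ 2) * Real.sin (P * x + ε / 2) + 384 * (x - 1 / 4) * s)) x := by
    intro x
    rw [hderiv1]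
    have hlin : HasDerivAt (fun x : ℝ => P * x + ε / 2) P x := by
      simpa using ((hasDerivAt_id x).const_mul P).add_const (ε / 2)
    have hcos : HasDerivAt (fun x : ℝ => Real.cos (P * x + ε / 2))
        (-Real.sin (P * x + ε / 2) * P) x := (Real.hasDerivAt_cos _).comp x hlin
    have hsq : HasDerivAt (fun x : ℝ => (x - 1 / 4) ^ 2) (2 * (x - 1 / 4)) x := by
      have := ((hasDerivAt_id x).sub_const (1 / 4)).fun_pow 2
      simpa using this
    have := ((hcos.const_mul P).add ((hsq.const_mul (192 : ℝ)).mul_const s)).const_mul c₀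
    exact this.congr_deriv (by ring)
  intro ζ hζ
  obtain ⟨hζ0, hζ4⟩ := hζ
  have hQ := h1 ζ ⟨hζ0, hζ4⟩
  have hcos := h2 ζ ⟨hζ0, hζ4⟩
  set Q := (Real.arccos (deriv φ ζ) - ε / 2) ^ 2 - P ^ 2 * ζ ^ 2 with hQdef
  have hφ'val : deriv φ ζ = c₀ * (P * Real.cos (P * ζ + ε / 2) + 192 * (ζ - 1 / 4) ^ 2 * s) := by
    rw [hderiv1]
  have hφ''val : deriv (deriv φ) ζ
      = c₀ * (-(P ^ 2) * Real.sin (P * ζ + ε / 2) + 384 * (ζ - 1 / 4) * s) := (hd2 ζ).deriv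
  have hφ'lb : deriv φ ζ ≥ c₀ * (12 * s + 192 * (ζ - 1 / 4) ^ 2 * s) := by
    rw [hφ'val]
    have : P * Real.cos (P * ζ + ε / 2) ≥ 12 * s := hcos
    nlinarith [sq_nonneg (ζ - 1 / 4)]
  have hφ'0 : 0 ≤ deriv φ ζ := by
    have h0 : 0 ≤ c₀ * (12 * s + 192 * (ζ - 1 / 4) ^ 2 * s) := by positivity
    linarith
  have hw0 : (0 : ℝ) < ζ⁻¹ := inv_pos.mpr hζ0
  have hwζ : ζ⁻¹ * ζ = 1 := inv_mul_cancel₀ (ne_of_gt hζ0)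
  constructor
  · -- main inequality
    have hstep1 : ζ⁻¹ * deriv φ ζ * Q ≥ ζ⁻¹ * deriv φ ζ := by
      have hnn : 0 ≤ ζ⁻¹ * deriv φ ζ := mul_nonneg (le_of_lt hw0) hφ'0
      nlinarith [mul_nonneg hnn (by linarith : (0:ℝ) ≤ Q - 1)]
    have hstep2 : ζ⁻¹ * deriv φ ζ ≥ ζ⁻¹ * (c₀ * (12 * s + 192 * (ζ - 1 / 4) ^ 2 * s)) :=
      mul_le_mul_of_nonneg_left hφ'lb (le_of_lt hw0)
    -- key polynomial inequality (after multiplying by ζ)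
    have hu3 : (ζ - 1 / 4) ^ 3 ≤ 0 := by nlinarith [sq_nonneg (ζ - 1 / 4)]
    have hu3ζ : (ζ - 1 / 4) ^ 3 * ζ ≤ 0 :=
      mul_nonpos_of_nonpos_of_nonneg hu3 (le_of_lt hζ0)
    have hPcmp : 640 * ((ζ - 1 / 4) ^ 3 * ζ) ≤ 64 * P ^ 2 * ((ζ - 1 / 4) ^ 3 * ζ) := by
      nlinarith [mul_nonneg (show (0:ℝ) ≤ 640 - 64 * P ^ 2 by linarith)
        (neg_nonneg.mpr hu3ζ)]
    have hkey0 : 384 * (ζ - 1 / 4) * ζ + 640 * ((ζ - 1 / 4) ^ 3 * ζ)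
        + (12 + 192 * (ζ - 1 / 4) ^ 2) ≥ 768 * ζ ^ 3 := by
      nlinarith [mul_nonneg (sub_nonneg.mpr hζ4) (sq_nonneg (4 * ζ - 1)),
        mul_nonneg (le_of_lt hζ0) (sq_nonneg (4 * ζ - 1)), sq_nonneg ζ,
        mul_nonneg (le_of_lt hζ0) (le_of_lt hζ0), sq_nonneg (4 * ζ - 1)]
    have hkey : 384 * (ζ - 1 / 4) * ζ + 64 * P ^ 2 * (ζ - 1 / 4) ^ 3 * ζ
        + (12 + 192 * (ζ - 1 / 4) ^ 2) ≥ 768 * ζ ^ 3 := by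
      have h64 : 64 * P ^ 2 * (ζ - 1 / 4) ^ 3 * ζ = 64 * P ^ 2 * ((ζ - 1 / 4) ^ 3 * ζ) := by ring
      linarith
    have hkey2 : 384 * (ζ - 1 / 4) + 64 * P ^ 2 * (ζ - 1 / 4) ^ 3
        + ζ⁻¹ * (12 + 192 * (ζ - 1 / 4) ^ 2) ≥ 768 * ζ ^ 2 := by
      have := mul_le_mul_of_nonneg_left hkey (le_of_lt hw0)
      have hexp : ζ⁻¹ * (384 * (ζ - 1 / 4) * ζ + 64 * P ^ 2 * (ζ - 1 / 4) ^ 3 * ζ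
          + (12 + 192 * (ζ - 1 / 4) ^ 2))
          = 384 * (ζ - 1 / 4) * (ζ⁻¹ * ζ) + 64 * P ^ 2 * (ζ - 1 / 4) ^ 3 * (ζ⁻¹ * ζ)
          + ζ⁻¹ * (12 + 192 * (ζ - 1 / 4) ^ 2) := by ring
      have hexp2 : ζ⁻¹ * (768 * ζ ^ 3) = 768 * ζ ^ 2 * (ζ⁻¹ * ζ) := by ring
      rw [hexp, hexp2, hwζ] at this
      simpa using this
    have hsum : deriv (deriv φ) ζ + P ^ 2 * φ ζ + ζ⁻¹ * (c₀ * (12 * s + 192 * (ζ - 1 / 4) ^ 2 * s))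
        = c₀ * s * (384 * (ζ - 1 / 4) + 64 * P ^ 2 * (ζ - 1 / 4) ^ 3
          + ζ⁻¹ * (12 + 192 * (ζ - 1 / 4) ^ 2)) := by
      rw [hφ''val, hφ ζ]
      ring
    have hcs : 0 < c₀ * s := mul_pos hc₀ hs0
    have hfin : c₀ * s * (384 * (ζ - 1 / 4) + 64 * P ^ 2 * (ζ - 1 / 4) ^ 3
        + ζ⁻¹ * (12 + 192 * (ζ - 1 / 4) ^ 2)) ≥ c₀ * s * (768 * ζ ^ 2) :=
      mul_le_mul_of_nonneg_left hkey2 (le_of_lt hcs)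
    have hRHS : 48 * c₀ * s * (4 * (ζ - 1 / 4) + 1) ^ 2 = c₀ * s * (768 * ζ ^ 2) := by ring
    rw [hRHS]
    calc deriv (deriv φ) ζ + P ^ 2 * φ ζ + ζ⁻¹ * deriv φ ζ * Q
        ≥ deriv (deriv φ) ζ + P ^ 2 * φ ζ + ζ⁻¹ * deriv φ ζ := by linarith
      _ ≥ deriv (deriv φ) ζ + P ^ 2 * φ ζ
          + ζ⁻¹ * (c₀ * (12 * s + 192 * (ζ - 1 / 4) ^ 2 * s)) := by linarith
      _ = c₀ * s * (384 * (ζ - 1 / 4) + 64 * P ^ 2 * (ζ - 1 / 4) ^ 3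
          + ζ⁻¹ * (12 + 192 * (ζ - 1 / 4) ^ 2)) := hsum
      _ ≥ c₀ * s * (768 * ζ ^ 2) := hfin
  · positivity
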